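/- For λ ≥ √(2 log(n/k)) with 1 ≤ k ≤ n, the Gaussian squared distance of the scaled ℓ₁ subdifferential at a k-sparse vector x₀ satisfies δ(λ∂‖x₀‖₁) ≤ (λ² + 3)k. -/

import Mathlib

open MeasureTheory ProbabilityTheory Real
open scoped Pointwise
open Set
open scoped ENNReal NNReal

noncomputable def gphi (x : ℝ) : ℝ := (Real.sqrt (2 * π))⁻¹ * Real.exp (-(1/2) * x ^ 2)

lemma gphi_pdf : gaussianPDFReal 0 1 = gphi := by
  funext x
  unfold gaussianPDFReal gphi
  norm_num
  left
  ring_nf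

lemma gphi_cont : Continuous gphi := by unfold gphi; continuity

lemma gphi_nonneg (x : ℝ) : 0 ≤ gphi x := by
  unfold gphi; positivity

lemma gphi_int_one : ∫ x, gphi x = 1 := by
  have := integral_gaussianPDFReal_eq_one 0 (v := 1) one_ne_zero
  rwa [gphi_pdf] at this

lemma integral_gaussianReal01 (g : ℝ → ℝ) :
    ∫ x, g x ∂(gaussianReal 0 1) = ∫ x, gphi x * g x := by
  rw [gaussianReal_of_var_ne_zero 0 one_ne_zero]
  rw [show gaussianPDF 0 1 = fun x => ((gaussianPDFReal 0 1 x).toNNReal : ℝ≥0∞) from rfl]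
  rw [integral_withDensity_eq_integral_smul ((measurable_gaussianPDFReal 0 1).real_toNNReal) g]
  congr 1; funext x
  rw [NNReal.smul_def, smul_eq_mul, Real.coe_toNNReal _ (gaussianPDFReal_nonneg 0 1 x), gphi_pdf]

lemma gphi_eq (x : ℝ) : gphi x = (Real.sqrt (2 * π))⁻¹ * Real.exp (-(1/2 : ℝ) * x ^ 2) := rfl

lemma gphi_I2 : Integrable (fun x : ℝ => x ^ 2 * gphi x) := by
  have h := (integrable_rpow_mul_exp_neg_mul_sq (b := 1/2) (by norm_num) (s := 2)
    (by norm_num)).const_mul ((Real.sqrt (2 * π))⁻¹)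
  refine h.congr ?_
  filter_upwards with x
  rw [show ((2:ℝ)) = ((2:ℕ):ℝ) by norm_num, Real.rpow_natCast]
  simp [gphi_eq]; ring

lemma gphi_I1 : Integrable (fun x : ℝ => x * gphi x) := by
  have h := (integrable_mul_exp_neg_mul_sq (b := 1/2) (by norm_num)).const_mul
    ((Real.sqrt (2 * π))⁻¹)
  refine h.congr ?_
  filter_upwards with x
  simp [gphi_eq]; ring

lemma gphi_I0 : Integrable gphi := by
  have h := (integrable_exp_neg_mul_sq (b := 1/2) (by norm_num)).const_mul
    ((Real.sqrt (2 * π))⁻¹)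
  refine h.congr ?_
  filter_upwards with x
  simp [gphi_eq]

lemma gphi_neg (x : ℝ) : gphi (-x) = gphi x := by simp [gphi]

lemma gphi_odd : ∫ x : ℝ, x * gphi x = 0 := by
  have h : ∫ x : ℝ, (-x) * gphi (-x) = ∫ x : ℝ, x * gphi x :=
    (Measure.measurePreserving_neg (volume : Measure ℝ)).integral_comp
      (Homeomorph.neg ℝ).measurableEmbedding (fun x : ℝ => x * gphi x)
  have h2 : ∫ x : ℝ, (-x) * gphi (-x) = - ∫ x : ℝ, x * gphi x := by
    rw [← integral_neg]
    congr 1; funext x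
    rw [gphi_neg]; ring
  rw [h2] at h
  linarith

lemma sq_gauss_Ioi : ∫ x in Ioi (0:ℝ), x ^ 2 * Real.exp (-(1/2 : ℝ) * x ^ 2)
    = Real.sqrt (2 * π) / 2 := by
  have h := integral_rpow_mul_exp_neg_mul_rpow (p := 2) (q := 2) (b := 1/2)
    (by norm_num) (by norm_num) (by norm_num)
  have e : ∫ x in Ioi (0:ℝ), x ^ (2:ℝ) * Real.exp (-(1/2 : ℝ) * x ^ (2:ℝ))
      = ∫ x in Ioi (0:ℝ), x ^ 2 * Real.exp (-(1/2 : ℝ) * x ^ 2) := by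
    refine setIntegral_congr_fun measurableSet_Ioi (fun x hx => ?_)
    rw [show ((2:ℝ)) = ((2:ℕ):ℝ) by norm_num, Real.rpow_natCast]
  rw [e] at h
  rw [h, show ((2:ℝ)+1)/2 = (1/2 + 1 : ℝ) by norm_num,
    Real.Gamma_add_one (by norm_num : (1/2:ℝ) ≠ 0), Real.Gamma_one_half_eq,
    show (-((2:ℝ)+1)/2 : ℝ) = -(1 + 1/2 : ℝ) by norm_num,
    Real.rpow_neg (by norm_num : (0:ℝ) ≤ 1/2),
    Real.rpow_add (by norm_num : (0:ℝ) < 1/2), Real.rpow_one,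
    ← Real.sqrt_eq_rpow, Real.sqrt_mul (by norm_num : (0:ℝ) ≤ 2)]
  have h2 : Real.sqrt (1/2) = (Real.sqrt 2)⁻¹ := by
    rw [show (1/2 : ℝ) = 2⁻¹ by norm_num, Real.sqrt_inv]
  rw [h2]
  have hs : Real.sqrt 2 ≠ 0 := by positivity
  field_simp

lemma gphi_abs (x : ℝ) : gphi |x| = gphi x := by simp [gphi, sq_abs]

lemma gphi_sq_Ioi : ∫ x in Ioi (0:ℝ), x ^ 2 * gphi x = 1/2 := by
  have : ∫ x in Ioi (0:ℝ), x ^ 2 * gphi x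
      = (Real.sqrt (2 * π))⁻¹ * ∫ x in Ioi (0:ℝ), x ^ 2 * Real.exp (-(1/2 : ℝ) * x ^ 2) := by
    rw [← integral_const_mul]
    refine setIntegral_congr_fun measurableSet_Ioi (fun x hx => ?_)
    simp [gphi]; ring
  rw [this, sq_gauss_Ioi]
  have hs : Real.sqrt (2*π) ≠ 0 := by positivity
  field_simp

lemma gphi_sq : ∫ x : ℝ, x ^ 2 * gphi x = 1 := by
  have h : (fun x : ℝ => x ^ 2 * gphi x) = fun x : ℝ => |x| ^ 2 * gphi |x| := by
    funext x; rw [gphi_abs, sq_abs]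
  rw [h, integral_comp_abs (f := fun t : ℝ => t ^ 2 * gphi t), gphi_sq_Ioi]
  norm_num

lemma sq_poly_int (c : ℝ) : Integrable (fun x : ℝ => gphi x * (x - c) ^ 2) := by
  have h : (fun x : ℝ => gphi x * (x - c) ^ 2)
      = fun x => (x ^ 2 * gphi x) + ((-2*c) * (x * gphi x) + (c^2) * gphi x) := by
    funext x; ring
  rw [h]
  exact gphi_I2.add ((gphi_I1.const_mul _).add (gphi_I0.const_mul _))

lemma gauss_moment (c : ℝ) : ∫ x, (x - c) ^ 2 ∂(gaussianReal 0 1) = 1 + c ^ 2 := by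
  rw [integral_gaussianReal01]
  have h : (fun x : ℝ => gphi x * (x - c) ^ 2)
      = fun x => (x ^ 2 * gphi x) + ((-2*c) * (x * gphi x) + (c^2) * gphi x) := by
    funext x; ring
  have e1 : ∫ x : ℝ, (x ^ 2 * gphi x + (-2 * c * (x * gphi x) + c ^ 2 * gphi x))
      = (∫ x : ℝ, x ^ 2 * gphi x) + ∫ x : ℝ, (-2 * c * (x * gphi x) + c ^ 2 * gphi x) :=
    integral_add gphi_I2 ((gphi_I1.const_mul (-2*c)).add (gphi_I0.const_mul (c^2)))
  have e2 : ∫ x : ℝ, (-2 * c * (x * gphi x) + c ^ 2 * gphi x)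
      = (∫ x : ℝ, -2 * c * (x * gphi x)) + ∫ x : ℝ, c ^ 2 * gphi x :=
    integral_add (gphi_I1.const_mul (-2*c)) (gphi_I0.const_mul (c^2))
  rw [h, e1, e2, integral_const_mul, integral_const_mul, gphi_sq, gphi_odd, gphi_int_one]
  ring

lemma integrable_gaussianReal_iff {g : ℝ → ℝ} (hg : Measurable g) :
    Integrable g (gaussianReal 0 1) ↔ Integrable (fun x => g x * gphi x) := by
  rw [gaussianReal_of_var_ne_zero 0 one_ne_zero,
    integrable_withDensity_iff (measurable_gaussianPDF 0 1)
      (Filter.Eventually.of_forall fun x => ENNReal.ofReal_lt_top)]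
  constructor <;> intro h <;> refine h.congr (Filter.Eventually.of_forall fun x => ?_) <;>
    simp [gaussianPDF, ENNReal.toReal_ofReal (gaussianPDFReal_nonneg 0 1 x), ← gphi_pdf]

noncomputable def tailF (u : ℝ) : ℝ := (max u 0) ^ 2 * gphi (max u 0)

lemma tailF_cont : Continuous tailF := by
  unfold tailF
  exact ((continuous_id.max continuous_const).pow 2).mul
    (gphi_cont.comp (continuous_id.max continuous_const))

lemma tailF_nonneg (u : ℝ) : 0 ≤ tailF u :=
  mul_nonneg (sq_nonneg _) (gphi_nonneg _)

lemma tailF_int : Integrable tailF := by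
  refine gphi_I2.mono' tailF_cont.aestronglyMeasurable ?_
  filter_upwards with u
  rw [Real.norm_eq_abs, abs_of_nonneg (tailF_nonneg u)]
  rcases le_or_gt u 0 with h | h
  · simp only [tailF, max_eq_right h, ne_eq, OfNat.ofNat_ne_zero, not_false_eq_true,
      zero_pow, zero_mul]
    exact mul_nonneg (sq_nonneg _) (gphi_nonneg _)
  · simp only [tailF, max_eq_left h.le, le_refl]

lemma tailF_int_Ioi (l : ℝ) (hl : 0 ≤ l) : ∫ u in Ioi (-l), tailF u = 1/2 := by
  have hsplit : Ioc (-l) 0 ∪ Ioi (0:ℝ) = Ioi (-l) := Ioc_union_Ioi_eq_Ioi (by linarith)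
  rw [← hsplit, setIntegral_union (Ioc_disjoint_Ioi le_rfl) measurableSet_Ioi
    tailF_int.integrableOn tailF_int.integrableOn]
  have h1 : ∫ u in Ioc (-l) 0, tailF u = 0 := by
    have he : EqOn tailF (fun _ => (0:ℝ)) (Ioc (-l) 0) := fun x hx => by
      simp [tailF, max_eq_right hx.2]
    rw [setIntegral_congr_fun measurableSet_Ioc he, integral_zero]
  have h2 : ∫ u in Ioi (0:ℝ), tailF u = 1/2 := by
    have he : EqOn tailF (fun x => x ^ 2 * gphi x) (Ioi 0) := fun x hx => by
      simp only [tailF, max_eq_left (le_of_lt (show (0:ℝ) < x from hx))]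
    rw [setIntegral_congr_fun measurableSet_Ioi he]
    exact gphi_sq_Ioi
  rw [h1, h2]; ring

lemma tailF_shift (l : ℝ) (hl : 0 ≤ l) : ∫ x : ℝ, tailF (|x| - l) = 1 := by
  rw [integral_comp_abs (f := fun t : ℝ => tailF (t - l))]
  have A : MeasurableEmbedding (fun x : ℝ => x + -l) :=
    (Homeomorph.addRight (-l)).measurableEmbedding
  have hmap : ∫ u in Ioi (-l), tailF u = ∫ x in Ioi (0:ℝ), tailF (x + -l) := by
    conv_lhs => rw [← map_add_right_eq_self (volume : Measure ℝ) (-l)]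
    have hpre : (fun x : ℝ => x + -l) ⁻¹' Ioi (-l) = Ioi 0 := by
      ext x
      simp only [mem_preimage, mem_Ioi]
      constructor <;> intro h <;> linarith
    rw [A.setIntegral_map tailF (Ioi (-l)), hpre]
  have h3 : ∫ x in Ioi (0:ℝ), tailF (x - l) = 1/2 := by
    rw [show (fun x : ℝ => tailF (x - l)) = fun x => tailF (x + -l) by
      funext x; rw [sub_eq_add_neg]]
    rw [← hmap, tailF_int_Ioi l hl]
  rw [h3]; norm_num

lemma tailF_le (u : ℝ) : tailF u ≤ (4 * (Real.sqrt (2 * π))⁻¹) * Real.exp (-(1/4) * (max u 0) ^ 2) := by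
  set m := max u 0 with hm
  have hm0 : 0 ≤ m := le_max_right _ _
  have key1 : m ^ 2 ≤ 4 * Real.exp (m ^ 2 / 4) := by
    have := Real.add_one_le_exp (m ^ 2 / 4)
    nlinarith [Real.exp_pos (m ^ 2 / 4), sq_nonneg m]
  have : tailF u = m ^ 2 * ((Real.sqrt (2 * π))⁻¹ * Real.exp (-(1/2) * m ^ 2)) := rfl
  rw [this]
  have hc : (0:ℝ) < (Real.sqrt (2 * π))⁻¹ := by positivity
  calc m ^ 2 * ((Real.sqrt (2 * π))⁻¹ * Real.exp (-(1/2) * m ^ 2))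
      ≤ (4 * Real.exp (m ^ 2 / 4)) * ((Real.sqrt (2 * π))⁻¹ * Real.exp (-(1/2) * m ^ 2)) := by
        apply mul_le_mul_of_nonneg_right key1
        positivity
    _ = (4 * (Real.sqrt (2 * π))⁻¹) * Real.exp (-(1/4) * m ^ 2) := by
        rw [show (4:ℝ) * Real.exp (m ^ 2 / 4) * ((Real.sqrt (2 * π))⁻¹ * Real.exp (-(1/2) * m ^ 2))
          = (4 * (Real.sqrt (2 * π))⁻¹) * (Real.exp (m ^ 2 / 4) * Real.exp (-(1/2) * m ^ 2)) by ring,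
          ← Real.exp_add]
        congr 2
        ring

lemma tail_comp_int (l : ℝ) (hl : 0 ≤ l) : Integrable (fun x : ℝ => tailF (|x| - l)) := by
  have hint : Integrable (fun x : ℝ => (4 * (Real.sqrt (2 * π))⁻¹ * Real.exp (l^2/4))
      * Real.exp (-(1/8 : ℝ) * x ^ 2)) :=
    (integrable_exp_neg_mul_sq (by norm_num : (0:ℝ) < 1/8)).const_mul _
  refine hint.mono' ((tailF_cont.comp ((continuous_abs).sub continuous_const)).aestronglyMeasurable) ?_
  filter_upwards with x
  rw [Real.norm_eq_abs, abs_of_nonneg (tailF_nonneg _)]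
  refine le_trans (tailF_le (|x| - l)) ?_
  set m := max (|x| - l) 0 with hm
  have hm0 : 0 ≤ m := le_max_right _ _
  have key2 : x ^ 2 ≤ 2 * m ^ 2 + 2 * l ^ 2 := by
    rcases le_or_gt (|x|) l with h | h
    · nlinarith [sq_abs x, abs_nonneg x, sq_nonneg m]
    · have hme : m = |x| - l := max_eq_left (by linarith)
      nlinarith [sq_abs x, sq_nonneg (|x| - 2*l)]
  have hexp : Real.exp (-(1/4) * m ^ 2) ≤ Real.exp (l^2/4) * Real.exp (-(1/8 : ℝ) * x ^ 2) := by
    rw [← Real.exp_add]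
    apply Real.exp_le_exp.2
    nlinarith
  calc 4 * (Real.sqrt (2 * π))⁻¹ * Real.exp (-(1/4) * m ^ 2)
      ≤ 4 * (Real.sqrt (2 * π))⁻¹ * (Real.exp (l^2/4) * Real.exp (-(1/8 : ℝ) * x ^ 2)) := by
        apply mul_le_mul_of_nonneg_left hexp (by positivity)
    _ = 4 * (Real.sqrt (2 * π))⁻¹ * Real.exp (l^2/4) * Real.exp (-(1/8 : ℝ) * x ^ 2) := by ring

lemma tail_bound (l : ℝ) (hl : 0 ≤ l) :
    ∫ x, (max (|x| - l) 0) ^ 2 ∂(gaussianReal 0 1) ≤ Real.exp (-(1/2) * l ^ 2) := by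
  rw [integral_gaussianReal01]
  have hle : ∀ x : ℝ, gphi x * (max (|x| - l) 0) ^ 2
      ≤ Real.exp (-(1/2) * l ^ 2) * tailF (|x| - l) := by
    intro x
    set m := max (|x| - l) 0 with hm
    have hm0 : 0 ≤ m := le_max_right _ _
    have ht : tailF (|x| - l) = m ^ 2 * gphi m := rfl
    rw [ht]
    rcases le_or_gt (|x|) l with h | h
    · have : m = 0 := max_eq_right (by linarith)
      rw [this]
      simp only [ne_eq, OfNat.ofNat_ne_zero, not_false_eq_true, zero_pow, mul_zero, zero_mul]
      positivity
    · have hme : m = |x| - l := max_eq_left (by linarith)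
      have hx2 : m ^ 2 + l ^ 2 ≤ x ^ 2 := by
        nlinarith [sq_abs x]
      have hexp : Real.exp (-(1/2) * x ^ 2)
          ≤ Real.exp (-(1/2) * l ^ 2) * Real.exp (-(1/2) * m ^ 2) := by
        rw [← Real.exp_add]
        apply Real.exp_le_exp.2
        nlinarith
      have : gphi x * m ^ 2 = m ^ 2 * ((Real.sqrt (2 * π))⁻¹ * Real.exp (-(1/2) * x ^ 2)) := by
        rw [gphi]; ring
      rw [this, gphi]
      calc m ^ 2 * ((Real.sqrt (2 * π))⁻¹ * Real.exp (-(1/2) * x ^ 2))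
          ≤ m ^ 2 * ((Real.sqrt (2 * π))⁻¹ *
            (Real.exp (-(1/2) * l ^ 2) * Real.exp (-(1/2) * m ^ 2))) := by
            apply mul_le_mul_of_nonneg_left _ (sq_nonneg m)
            apply mul_le_mul_of_nonneg_left hexp (by positivity)
        _ = Real.exp (-(1/2) * l ^ 2) * (m ^ 2 * ((Real.sqrt (2 * π))⁻¹
            * Real.exp (-(1/2) * m ^ 2))) := by ring
  have hmono := integral_mono_of_nonneg
    (f := fun x => gphi x * (max (|x| - l) 0) ^ 2)
    (g := fun x => Real.exp (-(1/2) * l ^ 2) * tailF (|x| - l))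
    (Filter.Eventually.of_forall fun x => mul_nonneg (gphi_nonneg x) (sq_nonneg _))
    ((tail_comp_int l hl).const_mul _)
    (Filter.Eventually.of_forall hle)
  refine le_trans hmono ?_
  rw [integral_const_mul, tailF_shift l hl, mul_one]

lemma int_sq_shift (c : ℝ) : Integrable (fun x => (x - c) ^ 2) (gaussianReal 0 1) := by
  rw [integrable_gaussianReal_iff (by measurability)]
  exact (sq_poly_int c).congr (Filter.Eventually.of_forall fun x => by ring)

lemma int_tail (l : ℝ) (hl : 0 ≤ l) :
    Integrable (fun x => (max (|x| - l) 0) ^ 2) (gaussianReal 0 1) := by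
  rw [integrable_gaussianReal_iff (by measurability)]
  refine gphi_I2.mono' ?_ ?_
  · exact ((((continuous_abs.sub continuous_const).max continuous_const).pow 2).mul
      gphi_cont).aestronglyMeasurable
  · filter_upwards with x
    have hm0 : (0:ℝ) ≤ max (|x| - l) 0 := le_max_right _ _
    have hmx : max (|x| - l) 0 ≤ |x| := max_le (by linarith [abs_nonneg x]) (abs_nonneg x)
    rw [Real.norm_eq_abs, abs_of_nonneg (mul_nonneg (sq_nonneg _) (gphi_nonneg _))]
    have : (max (|x| - l) 0) ^ 2 ≤ x ^ 2 := by
      rw [← sq_abs x]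
      exact pow_le_pow_left₀ hm0 hmx 2
    exact mul_le_mul_of_nonneg_right this (gphi_nonneg x)

lemma map_eval_pi {n : ℕ} (i : Fin n) :
    (Measure.pi fun _ : Fin n => gaussianReal 0 1).map (fun h : Fin n → ℝ => h i)
      = gaussianReal 0 1 := by
  ext s hs
  rw [Measure.map_apply (measurable_pi_apply i) hs]
  have hpre : (fun h : Fin n → ℝ => h i) ⁻¹' s
      = Set.pi Set.univ (Function.update (fun _ : Fin n => (Set.univ : Set ℝ)) i s) := by
    rw [← Set.eval_preimage]
  rw [hpre, Measure.pi_pi]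
  rw [Finset.prod_eq_single_of_mem i (Finset.mem_univ i)]
  · rw [Function.update_self]
  · intro j _ hj
    rw [Function.update_of_ne hj]
    simp


lemma eval_pi_facts {n : ℕ} (i : Fin n) (g : ℝ → ℝ) (hg : Continuous g)
    (hgi : Integrable g (gaussianReal 0 1)) :
    Integrable (fun h : EuclideanSpace ℝ (Fin n) => g (h i))
        (Measure.map (MeasurableEquiv.toLp 2 (Fin n → ℝ)) (Measure.pi fun _ : Fin n => gaussianReal 0 1))
    ∧ ∫ h : EuclideanSpace ℝ (Fin n), g (h i)
        ∂(Measure.map (MeasurableEquiv.toLp 2 (Fin n → ℝ)) (Measure.pi fun _ : Fin n => gaussianReal 0 1)) = ∫ t, g t ∂(gaussianReal 0 1) := by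
  have h1 : Integrable (fun h : Fin n → ℝ => g (h i))
      (Measure.pi fun _ : Fin n => gaussianReal 0 1) := by
    refine (integrable_map_measure hg.aestronglyMeasurable
      (measurable_pi_apply i).aemeasurable).mp ?_
    rw [map_eval_pi i]
    exact hgi
  have h2 : ∫ h : Fin n → ℝ, g (h i) ∂(Measure.pi fun _ : Fin n => gaussianReal 0 1)
      = ∫ t, g t ∂(gaussianReal 0 1) := by
    rw [← integral_map (measurable_pi_apply i).aemeasurable
      (hg.aestronglyMeasurable
        (μ := (Measure.pi fun _ : Fin n => gaussianReal 0 1).map (fun h : Fin n → ℝ => h i))),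
      map_eval_pi i]
  exact ⟨(integrable_map_equiv _ _).mpr h1, by rw [integral_map_equiv]; exact h2⟩

theorem gaussian_sq_dist_l1_bound {n : ℕ} (x₀ : EuclideanSpace ℝ (Fin n)) (l : ℝ)
    (k : ℕ) (hk : k = (Finset.univ.filter fun i => x₀ i ≠ 0).card)
    (hk1 : 1 ≤ k) (hkn : k ≤ n)
    (hl : l ≥ Real.sqrt (2 * Real.log (n / k)))
    (D : Set (EuclideanSpace ℝ (Fin n)))
    (hD : D = {s | (∀ i, |s i| ≤ 1) ∧ ∀ i, x₀ i ≠ 0 → s i = Real.sign (x₀ i)})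
    (μ : Measure (EuclideanSpace ℝ (Fin n)))
    (hμ : μ = Measure.map (MeasurableEquiv.toLp 2 (Fin n → ℝ)) (Measure.pi fun _ : Fin n => gaussianReal 0 1)) :
    ∫ h, Metric.infDist h (l • D) ^ 2 ∂μ ≤ (l ^ 2 + 3) * k := by
  classical
  subst hμ hD
  have hl0 : 0 ≤ l := le_trans (Real.sqrt_nonneg _) hl
  set γ := gaussianReal 0 1 with hγ
  set μpi : Measure (EuclideanSpace ℝ (Fin n)) :=
    Measure.map (MeasurableEquiv.toLp 2 (Fin n → ℝ)) (Measure.pi fun _ : Fin n => gaussianReal 0 1) with hμpi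
  set D : Set (EuclideanSpace ℝ (Fin n)) :=
    {s | (∀ i, |s i| ≤ 1) ∧ ∀ i, x₀ i ≠ 0 → s i = Real.sign (x₀ i)} with hD
  set G : Fin n → ℝ → ℝ := fun i t =>
    if x₀ i = 0 then (max (|t| - l) 0) ^ 2 else (t - l * Real.sign (x₀ i)) ^ 2 with hG
  -- pointwise bound
  have key : ∀ h : EuclideanSpace ℝ (Fin n),
      Metric.infDist h (l • D) ^ 2 ≤ ∑ i, G i (h i) := by
    intro h
    set s : EuclideanSpace ℝ (Fin n) := WithLp.toLp 2 (fun i =>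
      if x₀ i = 0 then (if l = 0 then 0 else max (-l) (min l (h i)) / l)
      else Real.sign (x₀ i)) with hs_def
    have hsD : s ∈ D := by
      constructor
      · intro i
        by_cases hxi : x₀ i = 0
        · by_cases hl' : l = 0
          · simp [hs_def, hxi, hl']
          · have hlpos : 0 < l := lt_of_le_of_ne hl0 (Ne.symm hl')
            have : s i = max (-l) (min l (h i)) / l := by simp [hs_def, hxi, hl']
            rw [this, abs_le]
            constructor
            · rw [le_div_iff₀ hlpos]
              have := le_max_left (-l) (min l (h i))
              linarith
            · rw [div_le_one hlpos]
              exact max_le (by linarith) (min_le_left _ _)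
        · have : s i = Real.sign (x₀ i) := by simp [hs_def, hxi]
          rw [this]
          rcases Real.sign_apply_eq_of_ne_zero _ hxi with hs1 | hs1 <;> rw [hs1] <;> norm_num
      · intro i hi
        simp [hs_def, hi]
    have h1 : Metric.infDist h (l • D) ≤ dist h (l • s) :=
      Metric.infDist_le_dist_of_mem (smul_mem_smul_set hsD)
    have h2 : Metric.infDist h (l • D) ^ 2 ≤ dist h (l • s) ^ 2 :=
      pow_le_pow_left₀ Metric.infDist_nonneg h1 2
    have h3 : dist h (l • s) ^ 2 = ∑ i, (h i - l * s i) ^ 2 := by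
      rw [EuclideanSpace.dist_eq, Real.sq_sqrt (Finset.sum_nonneg fun i _ => sq_nonneg _)]
      exact Finset.sum_congr rfl fun i _ => by
        rw [Real.dist_eq, sq_abs, PiLp.smul_apply, smul_eq_mul]
    refine le_trans h2 (le_trans (le_of_eq h3) (Finset.sum_le_sum fun i _ => ?_))
    by_cases hxi : x₀ i = 0
    · have hGi : G i (h i) = (max (|h i| - l) 0) ^ 2 := by simp [hG, hxi]
      rw [hGi]
      by_cases hl' : l = 0
      · have hsi : s i = 0 := by simp [hs_def, hxi, hl']
        rw [hsi, hl']
        have : max (|h i| - 0) 0 = |h i| := by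
          rw [sub_zero]; exact max_eq_left (abs_nonneg _)
        rw [this, sq_abs, mul_zero, sub_zero]
      · have hlpos : 0 < l := lt_of_le_of_ne hl0 (Ne.symm hl')
        have hsi : s i = max (-l) (min l (h i)) / l := by simp [hs_def, hxi, hl']
        rw [hsi, mul_div_cancel₀ _ hl']
        set M := max (-l) (min l (h i)) with hM
        have hB0 : 0 ≤ max (|h i| - l) 0 := le_max_right _ _
        have habs : |h i - M| ≤ max (|h i| - l) 0 := by
          rcases le_total l (h i) with hc | hc
          · have hMl : M = l := by rw [hM, min_eq_left hc, max_eq_right (by linarith)]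
            rw [hMl, abs_of_nonneg (by linarith)]
            refine le_trans ?_ (le_max_left _ _)
            have := le_abs_self (h i)
            linarith
          · rcases le_total (h i) (-l) with hc2 | hc2
            · have hMl : M = -l := by
                rw [hM, min_eq_right (by linarith), max_eq_left hc2]
              rw [hMl, sub_neg_eq_add, abs_of_nonpos (by linarith)]
              refine le_trans ?_ (le_max_left _ _)
              have := neg_le_abs (h i)
              linarith
            · have hMl : M = h i := by
                rw [hM, min_eq_right hc, max_eq_right hc2]
              rw [hMl, sub_self, abs_zero]
              exact hB0
        have := abs_le.mp habs
        exact sq_le_sq' (by linarith [this.1]) this.2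
    · have hGi : G i (h i) = (h i - l * Real.sign (x₀ i)) ^ 2 := by simp [hG, hxi]
      have hsi : s i = Real.sign (x₀ i) := by simp [hs_def, hxi]
      rw [hGi, hsi]
  -- measurability and integrability of coordinates
  have hGcont : ∀ i, Continuous (G i) := by
    intro i
    by_cases hxi : x₀ i = 0 <;> simp only [hG, hxi, if_true, if_false] <;> fun_prop
  have hGintγ : ∀ i, Integrable (G i) γ := by
    intro i
    by_cases hxi : x₀ i = 0
    · simpa only [hG, hxi, if_true] using int_tail l hl0
    · simpa only [hG, hxi, if_false] using int_sq_shift (l * Real.sign (x₀ i))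
  have hGcomp : ∀ i, Integrable (fun h : EuclideanSpace ℝ (Fin n) => G i (h i)) μpi :=
    fun i => (eval_pi_facts i (G i) (hGcont i) (hGintγ i)).1
  have hGeq : ∀ i, ∫ h, G i (h i) ∂μpi = ∫ t, G i t ∂γ :=
    fun i => (eval_pi_facts i (G i) (hGcont i) (hGintγ i)).2
  -- integrate
  have step1 : ∫ h, Metric.infDist h (l • D) ^ 2 ∂μpi ≤ ∑ i, ∫ t, G i t ∂γ := by
    have hmono := integral_mono_of_nonneg (μ := μpi)
      (f := fun h => Metric.infDist h (l • D) ^ 2)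
      (g := fun h : EuclideanSpace ℝ (Fin n) => ∑ i, G i (h i))
      (Filter.Eventually.of_forall fun h => sq_nonneg _)
      (integrable_finset_sum Finset.univ fun i _ => hGcomp i)
      (Filter.Eventually.of_forall key)
    simp only at hmono
    refine le_trans hmono (le_of_eq ?_)
    rw [integral_finset_sum Finset.univ fun i _ => hGcomp i]
    exact Finset.sum_congr rfl fun i _ => hGeq i
  refine le_trans step1 ?_
  -- split sum over support / off-support
  have hval_supp : ∀ i, x₀ i ≠ 0 → ∫ t, G i t ∂γ = 1 + l ^ 2 := by
    intro i hi
    have : ∫ t, G i t ∂γ = 1 + (l * Real.sign (x₀ i)) ^ 2 := by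
      simp only [hG, if_neg hi]
      exact gauss_moment _
    rw [this]
    rcases Real.sign_apply_eq_of_ne_zero _ hi with hs1 | hs1 <;> rw [hs1] <;> ring
  have hval_off : ∀ i, x₀ i = 0 → ∫ t, G i t ∂γ ≤ Real.exp (-(1/2) * l ^ 2) := by
    intro i hi
    simp only [hG, if_pos hi]
    exact tail_bound l hl0
  have hsplit := Finset.sum_filter_add_sum_filter_not Finset.univ
    (fun i => x₀ i ≠ 0) (fun i => ∫ t, G i t ∂γ)
  rw [← hsplit]
  have hcard2 : (Finset.univ.filter fun i => ¬ x₀ i ≠ 0).card = n - k := by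
    have := Finset.card_filter_add_card_filter_not
      (s := (Finset.univ : Finset (Fin n))) (p := fun i => x₀ i ≠ 0)
    simp only [Finset.card_univ, Fintype.card_fin] at this
    omega
  have hS : ∑ i ∈ Finset.univ.filter (fun i => x₀ i ≠ 0), ∫ t, G i t ∂γ
      = k * (1 + l ^ 2) := by
    rw [Finset.sum_congr rfl (fun i hi => hval_supp i (Finset.mem_filter.mp hi).2),
      Finset.sum_const, ← hk, nsmul_eq_mul]
  have hSc : ∑ i ∈ Finset.univ.filter (fun i => ¬ x₀ i ≠ 0), ∫ t, G i t ∂γ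
      ≤ (n - k : ℕ) * Real.exp (-(1/2) * l ^ 2) := by
    refine le_trans (Finset.sum_le_sum fun i hi =>
      hval_off i (not_not.mp (Finset.mem_filter.mp hi).2)) ?_
    rw [Finset.sum_const, hcard2, nsmul_eq_mul]
  -- numeric bound on the exponential
  have hk0 : (0:ℝ) < k := by exact_mod_cast hk1
  have hn0 : (0:ℝ) < n := lt_of_lt_of_le hk0 (by exact_mod_cast hkn)
  have hexp_le : Real.exp (-(1/2) * l ^ 2) ≤ (k:ℝ) / n := by
    have hdiv1 : (1:ℝ) ≤ (n:ℝ) / k := (one_le_div hk0).mpr (by exact_mod_cast hkn)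
    have hlog0 : 0 ≤ Real.log ((n:ℝ) / k) := Real.log_nonneg hdiv1
    have hsq : 2 * Real.log ((n:ℝ) / k) ≤ l ^ 2 := by
      have h1 : Real.sqrt (2 * Real.log ((n:ℝ) / k)) ^ 2 ≤ l ^ 2 :=
        pow_le_pow_left₀ (Real.sqrt_nonneg _) hl 2
      rwa [Real.sq_sqrt (by linarith)] at h1
    have hlogkn : Real.log ((k:ℝ) / n) = - Real.log ((n:ℝ) / k) := by
      rw [← Real.log_inv, inv_div]
    have hle2 : -(1/2) * l ^ 2 ≤ Real.log ((k:ℝ) / n) := by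
      rw [hlogkn]; linarith
    calc Real.exp (-(1/2) * l ^ 2) ≤ Real.exp (Real.log ((k:ℝ) / n)) :=
          Real.exp_le_exp.2 hle2
      _ = (k:ℝ) / n := Real.exp_log (by positivity)
  refine le_trans (add_le_add (le_of_eq hS) hSc) ?_
  have hcast : ((n - k : ℕ) : ℝ) = (n:ℝ) - k := by
    rw [Nat.cast_sub hkn]
  have hterm : ((n - k : ℕ) : ℝ) * Real.exp (-(1/2) * l ^ 2) ≤ (k:ℝ) := by
    calc ((n - k : ℕ) : ℝ) * Real.exp (-(1/2) * l ^ 2)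
        ≤ (n:ℝ) * ((k:ℝ) / n) := by
          apply mul_le_mul (by rw [hcast]; linarith) hexp_le (Real.exp_pos _).le hn0.le
      _ = (k:ℝ) := by field_simp
  nlinarith [sq_nonneg l, hk0]
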